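/- Let M be an Hadamard manifold and X₁, X₂, … i.i.d. M-valued. If X₁ has a unique (β,ξ)-quantile q, then any measurable choice q̂_N from the sample (β,ξ)-quantile set argmin_p N^{-1}Σ_i ρ(X_i,p;β,ξ) converges almost surely to q as N → ∞. -/

import Mathlib

open Filter MeasureTheory ProbabilityTheory Metric
open scoped RealInnerProductSpace BigOperators Topology
set_option linter.unusedSectionVars false
set_option linter.unusedVariables false
set_option maxHeartbeats 1000000

lemma slln_wrapper {M : Type*} [MetricSpace M] [MeasurableSpace M] [BorelSpace M]
    {Ω : Type*} [MeasurableSpace Ω] (P : Measure Ω) [IsProbabilityMeasure P]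
    (μ : Measure M) [IsProbabilityMeasure μ]
    (X : ℕ → Ω → M) (hXmeas : ∀ i, Measurable (X i))
    (hident : ∀ i, P.map (X i) = μ)
    (hindep : ProbabilityTheory.iIndepFun X P)
    (f : M → ℝ) (hf : Continuous f) (hint : Integrable f μ) :
    ∀ᵐ ω ∂P, Tendsto (fun N : ℕ => (∑ i ∈ Finset.range N, f (X i ω)) / N) atTop
      (𝓝 (∫ x, f x ∂μ)) := by
  have hfm : Measurable f := hf.measurable
  have hY : ∀ i, Measurable (fun ω => f (X i ω)) := fun i => hfm.comp (hXmeas i)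
  have hint0 : Integrable (fun ω => f (X 0 ω)) P := by
    have : Integrable f (P.map (X 0)) := by rw [hident 0]; exact hint
    exact (integrable_map_measure hf.aestronglyMeasurable (hXmeas 0).aemeasurable).mp this
  have hid : ∀ i, IdentDistrib (fun ω => f (X i ω)) (fun ω => f (X 0 ω)) P P := by
    intro i
    have hXi : IdentDistrib (X i) (X 0) P P :=
      ⟨(hXmeas i).aemeasurable, (hXmeas 0).aemeasurable, by rw [hident i, hident 0]⟩
    exact hXi.comp hfm
  have hpi : Pairwise (Function.onFun (IndepFun · · P) (fun i ω => f (X i ω))) := by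
    intro i j hij
    exact (hindep.indepFun hij).comp hfm hfm
  have := strong_law_ae_real (fun i ω => f (X i ω)) hint0 hpi hid
  have hEq : P[fun ω => f (X 0 ω)] = ∫ x, f x ∂μ := by
    rw [← hident 0, integral_map (hXmeas 0).aemeasurable hf.aestronglyMeasurable]
  rw [hEq] at this
  exact this

section Aux
variable {M : Type*} [MetricSpace M] [ProperSpace M] [MeasurableSpace M] [BorelSpace M]
  {E : Type*} [NormedAddCommGroup E] [InnerProductSpace ℝ E]
  {Ξ : Type*} (log : M → M → E) (dir : Ξ → M → E)

-- basic inequality: |ρ p x - ρ p' x| bound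
lemma rho_diff_bound
    (hnorm : ∀ p x : M, ‖log p x‖ = dist p x)
    (β : ℝ) (hβ0 : 0 ≤ β) (ξ : Ξ)
    (hdirunit : ∀ (ξ' : Ξ) (p : M), ‖dir ξ' p‖ = 1)
    (p p' x : M) :
    |(‖log p x‖ + ⟪β • dir ξ p, log p x⟫) - (‖log p' x‖ + ⟪β • dir ξ p', log p' x⟫)|
      ≤ dist p p' + β * ‖dir ξ p - dir ξ p'‖ * dist p x + β * ‖log p x - log p' x‖ := by
  have h1 : |‖log p x‖ - ‖log p' x‖| ≤ dist p p' := by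
    rw [hnorm, hnorm]
    exact abs_dist_sub_le _ _ _
  have h2 : ⟪β • dir ξ p, log p x⟫ - ⟪β • dir ξ p', log p' x⟫
      = β * ⟪dir ξ p - dir ξ p', log p x⟫ + β * ⟪dir ξ p', log p x - log p' x⟫ := by
    simp [real_inner_smul_left, inner_sub_left, inner_sub_right]
    ring
  have h3 : |⟪dir ξ p - dir ξ p', log p x⟫| ≤ ‖dir ξ p - dir ξ p'‖ * dist p x := by
    calc |⟪dir ξ p - dir ξ p', log p x⟫| ≤ ‖dir ξ p - dir ξ p'‖ * ‖log p x‖ :=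
          abs_real_inner_le_norm _ _
      _ = ‖dir ξ p - dir ξ p'‖ * dist p x := by rw [hnorm]
  have h4 : |⟪dir ξ p', log p x - log p' x⟫| ≤ ‖log p x - log p' x‖ := by
    calc |⟪dir ξ p', log p x - log p' x⟫| ≤ ‖dir ξ p'‖ * ‖log p x - log p' x‖ :=
          abs_real_inner_le_norm _ _
      _ = ‖log p x - log p' x‖ := by rw [hdirunit]; ring
  calc |(‖log p x‖ + ⟪β • dir ξ p, log p x⟫) - (‖log p' x‖ + ⟪β • dir ξ p', log p' x⟫)|
      = |(‖log p x‖ - ‖log p' x‖) + (β * ⟪dir ξ p - dir ξ p', log p x⟫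
          + β * ⟪dir ξ p', log p x - log p' x⟫)| := by rw [← h2]; ring_nf
    _ ≤ |‖log p x‖ - ‖log p' x‖| + (|β * ⟪dir ξ p - dir ξ p', log p x⟫|
          + |β * ⟪dir ξ p', log p x - log p' x⟫|) := by
          exact (abs_add_le _ _).trans (by gcongr; exact abs_add_le _ _)
    _ ≤ dist p p' + (β * (‖dir ξ p - dir ξ p'‖ * dist p x) + β * ‖log p x - log p' x‖) := by
          gcongr
          · rw [abs_mul, abs_of_nonneg hβ0]
            exact mul_le_mul_of_nonneg_left h3 hβ0
          · rw [abs_mul, abs_of_nonneg hβ0]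
            exact mul_le_mul_of_nonneg_left h4 hβ0
    _ = dist p p' + β * ‖dir ξ p - dir ξ p'‖ * dist p x + β * ‖log p x - log p' x‖ := by ring

lemma rho_lb
    (hnorm : ∀ p x : M, ‖log p x‖ = dist p x)
    (β : ℝ) (hβ0 : 0 ≤ β) (ξ : Ξ)
    (hdirunit : ∀ (ξ' : Ξ) (p : M), ‖dir ξ' p‖ = 1)
    (p x : M) :
    (1 - β) * dist p x ≤ ‖log p x‖ + ⟪β • dir ξ p, log p x⟫ := by
  have h : |⟪β • dir ξ p, log p x⟫| ≤ β * dist p x := by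
    calc |⟪β • dir ξ p, log p x⟫| ≤ ‖β • dir ξ p‖ * ‖log p x‖ := abs_real_inner_le_norm _ _
      _ = β * dist p x := by
          rw [norm_smul, hdirunit, hnorm, Real.norm_eq_abs, abs_of_nonneg hβ0]; ring
  have := neg_abs_le ⟪β • dir ξ p, log p x⟫
  rw [hnorm]
  nlinarith [abs_nonneg ⟪β • dir ξ p, log p x⟫]

lemma rho_ub
    (hnorm : ∀ p x : M, ‖log p x‖ = dist p x)
    (β : ℝ) (hβ0 : 0 ≤ β) (ξ : Ξ)
    (hdirunit : ∀ (ξ' : Ξ) (p : M), ‖dir ξ' p‖ = 1)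
    (p x : M) :
    ‖log p x‖ + ⟪β • dir ξ p, log p x⟫ ≤ (1 + β) * dist p x := by
  have h : |⟪β • dir ξ p, log p x⟫| ≤ β * dist p x := by
    calc |⟪β • dir ξ p, log p x⟫| ≤ ‖β • dir ξ p‖ * ‖log p x‖ := abs_real_inner_le_norm _ _
      _ = β * dist p x := by
          rw [norm_smul, hdirunit, hnorm, Real.norm_eq_abs, abs_of_nonneg hβ0]; ring
  have := le_abs_self ⟪β • dir ξ p, log p x⟫
  rw [hnorm]
  nlinarith

end Aux

section Aux2
variable {M : Type*} [MetricSpace M]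
  {E : Type*} [NormedAddCommGroup E] [InnerProductSpace ℝ E]

noncomputable def hhf (log : M → M → E) (p : M) (δ : ℝ) (x : M) : ℝ :=
  ⨆ p' : (closedBall p δ), ‖log p'.1 x - log p x‖

variable (log : M → M → E) {p : M} {δ : ℝ}

lemma hhf_nonempty (hδ : 0 < δ) : Nonempty (closedBall p δ) :=
  ⟨⟨p, mem_closedBall_self hδ.le⟩⟩

lemma hhf_bddAbove (hnorm : ∀ p x : M, ‖log p x‖ = dist p x) (x : M) :
    BddAbove (Set.range fun p' : (closedBall p δ) => ‖log p'.1 x - log p x‖) := by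
  refine ⟨2 * dist p x + δ, ?_⟩
  rintro _ ⟨p', rfl⟩
  have h1 : ‖log p'.1 x - log p x‖ ≤ ‖log p'.1 x‖ + ‖log p x‖ := norm_sub_le _ _
  have h2 : ‖log p'.1 x‖ = dist p'.1 x := hnorm _ _
  have h3 : dist p'.1 x ≤ dist p'.1 p + dist p x := dist_triangle _ _ _
  have h4 : dist p'.1 p ≤ δ := mem_closedBall.mp p'.2
  have h5 : ‖log p x‖ = dist p x := hnorm _ _
  linarith

lemma hhf_le (hδ : 0 < δ) (hnorm : ∀ p x : M, ‖log p x‖ = dist p x) (x : M) :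
    hhf log p δ x ≤ 2 * dist p x + δ := by
  haveI := hhf_nonempty (p := p) hδ
  refine ciSup_le fun p' => ?_
  have h1 : ‖log p'.1 x - log p x‖ ≤ ‖log p'.1 x‖ + ‖log p x‖ := norm_sub_le _ _
  have h2 : ‖log p'.1 x‖ = dist p'.1 x := hnorm _ _
  have h3 : dist p'.1 x ≤ dist p'.1 p + dist p x := dist_triangle _ _ _
  have h4 : dist p'.1 p ≤ δ := mem_closedBall.mp p'.2
  have h5 : ‖log p x‖ = dist p x := hnorm _ _
  linarith

lemma le_hhf (hδ : 0 < δ) (hnorm : ∀ p x : M, ‖log p x‖ = dist p x) {p' : M}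
    (hp' : p' ∈ closedBall p δ) (x : M) :
    ‖log p' x - log p x‖ ≤ hhf log p δ x := by
  haveI := hhf_nonempty (p := p) hδ
  exact le_ciSup (hhf_bddAbove log hnorm x) ⟨p', hp'⟩

lemma hhf_nonneg (hδ : 0 < δ) (hnorm : ∀ p x : M, ‖log p x‖ = dist p x) (x : M) :
    0 ≤ hhf log p δ x := by
  have := le_hhf (p := p) log hδ hnorm (mem_closedBall_self hδ.le) x
  simpa using (norm_nonneg _).trans this

lemma hhf_lip_aux (hδ : 0 < δ) (hnorm : ∀ p x : M, ‖log p x‖ = dist p x)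
    (hcontr : ∀ p x x' : M, ‖log p x - log p x'‖ ≤ dist x x') (x x' : M) :
    hhf log p δ x ≤ hhf log p δ x' + 2 * dist x x' := by
  haveI := hhf_nonempty (p := p) hδ
  refine ciSup_le fun p' => ?_
  have h1 : ‖log p'.1 x - log p x‖ ≤ ‖log p'.1 x' - log p x'‖
      + ‖log p'.1 x - log p'.1 x'‖ + ‖log p x' - log p x‖ := by
    have : log p'.1 x - log p x =
        (log p'.1 x' - log p x') + (log p'.1 x - log p'.1 x') + (log p x' - log p x) := by
      abel
    rw [this]
    exact (norm_add_le _ _).trans (by gcongr; exact norm_add_le _ _)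
  have h2 := hcontr p'.1 x x'
  have h3 := hcontr p x' x
  have h4 := le_hhf log hδ hnorm p'.2 x'
  have := dist_comm x x'
  linarith [h4, h2, h3, dist_comm x' x ▸ h3]

lemma hhf_continuous (hδ : 0 < δ) (hnorm : ∀ p x : M, ‖log p x‖ = dist p x)
    (hcontr : ∀ p x x' : M, ‖log p x - log p x'‖ ≤ dist x x') :
    Continuous (hhf log p δ) := by
  have : LipschitzWith 2 (hhf log p δ) := by
    refine LipschitzWith.of_dist_le_mul fun x x' => ?_
    rw [Real.dist_eq, abs_sub_le_iff]
    push_cast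
    constructor
    · linarith [hhf_lip_aux (p := p) log hδ hnorm hcontr x x']
    · linarith [hhf_lip_aux (p := p) log hδ hnorm hcontr x' x, dist_comm x x']
  exact this.continuous

end Aux2

theorem sample_quantile_strong_consistency
    {M : Type*} [MetricSpace M] [ProperSpace M] [MeasurableSpace M] [BorelSpace M]
    {E : Type*} [NormedAddCommGroup E] [InnerProductSpace ℝ E]
    {Ξ : Type*} (log : M → M → E) (dir : Ξ → M → E)
    (hlog : Continuous fun q : M × M => log q.1 q.2)
    (hnorm : ∀ p x : M, ‖log p x‖ = dist p x)
    (hcontr : ∀ p x x' : M, ‖log p x - log p x'‖ ≤ dist x x')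
    (hdir : ∀ ξ' : Ξ, Continuous (dir ξ'))
    (hdirunit : ∀ (ξ' : Ξ) (p : M), ‖dir ξ' p‖ = 1)
    {Ω : Type*} [MeasurableSpace Ω] (P : Measure Ω) [IsProbabilityMeasure P]
    (μ : Measure M) [IsProbabilityMeasure μ]
    (X : ℕ → Ω → M) (hXmeas : ∀ i, Measurable (X i))
    (hident : ∀ i, P.map (X i) = μ)
    (hindep : ProbabilityTheory.iIndepFun X P)
    (βs : ℝ) (hβs0 : 0 ≤ βs) (hβs1 : βs < 1) (ξs : Ξ) (ps : M)
    (hfin : Integrable (fun x => ‖log ps x‖ + ⟪βs • dir ξs ps, log ps x⟫) μ)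
    (β : ℝ) (hβ0 : 0 ≤ β) (hβ1 : β < 1) (ξ : Ξ)
    (q : M)
    (hunique : ∀ p : M, p ≠ q →
      (∫ x, (‖log q x‖ + ⟪β • dir ξ q, log q x⟫) ∂μ) <
        ∫ x, (‖log p x‖ + ⟪β • dir ξ p, log p x⟫) ∂μ)
    (qhat : ℕ → Ω → M) (hqhatmeas : ∀ N, Measurable (qhat N))
    (hqhatmin : ∀ (N : ℕ) (ω : Ω) (p : M),
      (∑ i ∈ Finset.range N,
          (‖log (qhat N ω) (X i ω)‖ + ⟪β • dir ξ (qhat N ω), log (qhat N ω) (X i ω)⟫)) ≤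
        ∑ i ∈ Finset.range N,
          (‖log p (X i ω)‖ + ⟪β • dir ξ p, log p (X i ω)⟫)) :
    ∀ᵐ ω ∂P, Tendsto (fun N : ℕ => qhat N ω) atTop (nhds q) := by
  classical
  -- the loss function
  set ρ : M → M → ℝ := fun p x => ‖log p x‖ + ⟪β • dir ξ p, log p x⟫ with hρdef
  have hρc : Continuous fun pr : M × M => ρ pr.1 pr.2 := by
    apply Continuous.add
    · exact hlog.norm
    · exact Continuous.inner (((hdir ξ).comp continuous_fst).const_smul β) hlog
  have hρx : ∀ p, Continuous (ρ p) := fun p => hρc.comp (Continuous.prodMk_right p)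
  have hρp : ∀ x, Continuous fun p => ρ p x := fun x =>
    hρc.comp (continuous_id.prodMk continuous_const)
  have hρlb : ∀ p x, (1 - β) * dist p x ≤ ρ p x := fun p x =>
    rho_lb log dir hnorm β hβ0 ξ hdirunit p x
  have hρub : ∀ p x, ρ p x ≤ (1 + β) * dist p x := fun p x =>
    rho_ub log dir hnorm β hβ0 ξ hdirunit p x
  have hρ0 : ∀ p x, 0 ≤ ρ p x := fun p x =>
    le_trans (by nlinarith [dist_nonneg (x := p) (y := x)]) (hρlb p x)
  have hρdiff : ∀ p p' x, |ρ p x - ρ p' x| ≤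
      dist p p' + β * ‖dir ξ p - dir ξ p'‖ * dist p x + β * ‖log p x - log p' x‖ :=
    fun p p' x => rho_diff_bound log dir hnorm β hβ0 ξ hdirunit p p' x
  -- integrability
  have h1βs : (0:ℝ) < 1 - βs := by linarith
  have hdps : Integrable (fun x => dist ps x) μ := by
    have hb : Integrable (fun x => (1 - βs)⁻¹ * (‖log ps x‖ + ⟪βs • dir ξs ps, log ps x⟫)) μ :=
      hfin.const_mul _
    refine hb.mono ((continuous_const.dist continuous_id).aestronglyMeasurable)
      (Filter.Eventually.of_forall fun x => ?_)
    have hlb := rho_lb log dir hnorm βs hβs0 ξs hdirunit ps x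
    have h0 : 0 ≤ ‖log ps x‖ + ⟪βs • dir ξs ps, log ps x⟫ := by
      nlinarith [dist_nonneg (x := ps) (y := x)]
    have hle : dist ps x ≤ (1 - βs)⁻¹ * (‖log ps x‖ + ⟪βs • dir ξs ps, log ps x⟫) := by
      rw [le_inv_mul_iff₀ h1βs]
      linarith
    rw [Real.norm_eq_abs, Real.norm_eq_abs, abs_of_nonneg dist_nonneg,
      abs_of_nonneg (by positivity)]
    exact hle
  have hdint : ∀ p : M, Integrable (fun x => dist p x) μ := by
    intro p
    refine ((integrable_const (dist p ps)).add hdps).mono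
      ((continuous_const.dist continuous_id).aestronglyMeasurable)
      (Filter.Eventually.of_forall fun x => ?_)
    simp only [Pi.add_apply]
    rw [Real.norm_eq_abs, Real.norm_eq_abs, abs_of_nonneg dist_nonneg,
      abs_of_nonneg (by positivity)]
    exact dist_triangle p ps x
  have hρint : ∀ p : M, Integrable (ρ p) μ := by
    intro p
    refine ((hdint p).const_mul (1 + β)).mono (hρx p).aestronglyMeasurable
      (Filter.Eventually.of_forall fun x => ?_)
    rw [Real.norm_eq_abs, Real.norm_eq_abs, abs_of_nonneg (hρ0 p x),
      abs_of_nonneg (by positivity)]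
    exact hρub p x
  -- the population objective
  set G : M → ℝ := fun p => ∫ x, ρ p x ∂μ with hGdef
  have hGcont : Continuous G := by
    rw [continuous_iff_continuousAt]
    intro p0
    have := tendsto_integral_filter_of_dominated_convergence (μ := μ) (l := 𝓝 p0)
      (F := fun p x => ρ p x) (f := ρ p0) (bound := fun x => (1 + β) * (dist p0 x + 1))
      (Filter.Eventually.of_forall fun p => (hρx p).aestronglyMeasurable)
      (by
        filter_upwards [closedBall_mem_nhds p0 one_pos] with p hp
        refine Filter.Eventually.of_forall fun x => ?_
        rw [Real.norm_eq_abs, abs_of_nonneg (hρ0 p x)]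
        have h1 : dist p x ≤ dist p0 x + 1 := by
          have := dist_triangle p p0 x
          have h2 : dist p p0 ≤ 1 := mem_closedBall.mp hp
          linarith
        calc ρ p x ≤ (1 + β) * dist p x := hρub p x
          _ ≤ (1 + β) * (dist p0 x + 1) := by nlinarith)
      (((hdint p0).add (integrable_const 1)).const_mul (1 + β))
      (Filter.Eventually.of_forall fun x => ((hρp x).tendsto p0))
    exact this
  have hGq_lt : ∀ p : M, p ≠ q → G q < G p := fun p hp => hunique p hp
  -- sup-modulus functions
  set δk : ℕ → ℝ := fun k => ((k : ℝ) + 1)⁻¹ with hδkdef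
  have hδkpos : ∀ k, 0 < δk k := fun k => by positivity
  have hδk1 : ∀ k, δk k ≤ 1 := fun k => by
    rw [hδkdef]
    rw [inv_le_one_iff₀]
    right; push_cast; linarith [Nat.cast_nonneg (α := ℝ) k]
  have hδk_tendsto : Tendsto δk atTop (𝓝 0) := by
    simpa [hδkdef, one_div] using tendsto_one_div_add_atTop_nhds_zero_nat (𝕜 := ℝ)
  have hhint : ∀ (p : M) (k : ℕ), Integrable (hhf log p (δk k)) μ := by
    intro p k
    refine (((hdint p).const_mul 2).add (integrable_const 1)).mono
      (hhf_continuous log (hδkpos k) hnorm hcontr).aestronglyMeasurable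
      (Filter.Eventually.of_forall fun x => ?_)
    simp only [Pi.add_apply]
    rw [Real.norm_eq_abs, Real.norm_eq_abs,
      abs_of_nonneg (hhf_nonneg log (hδkpos k) hnorm x),
      abs_of_nonneg (by positivity)]
    have := hhf_le (p := p) log (hδkpos k) hnorm x
    have := hδk1 k
    linarith
  set Hfun : M → ℕ → ℝ := fun p k => ∫ x, hhf log p (δk k) x ∂μ with hHdef
  have hhptw : ∀ (p x : M), Tendsto (fun k => hhf log p (δk k) x) atTop (𝓝 0) := by
    intro p x
    rw [Metric.tendsto_atTop]
    intro ε hε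
    have hc : Continuous fun p' => log p' x :=
      hlog.comp (continuous_id.prodMk continuous_const)
    obtain ⟨δ', hδ'pos, hδ'⟩ := Metric.continuous_iff.mp hc p (ε / 2) (half_pos hε)
    have hev : ∀ᶠ k in atTop, δk k < δ' := hδk_tendsto.eventually_lt_const hδ'pos
    obtain ⟨N0, hN0⟩ := eventually_atTop.mp hev
    refine ⟨N0, fun k hk => ?_⟩
    have hle : hhf log p (δk k) x ≤ ε / 2 := by
      haveI := hhf_nonempty (p := p) (hδkpos k)
      refine ciSup_le fun p' => ?_
      have hd : dist p'.1 p < δ' := lt_of_le_of_lt (mem_closedBall.mp p'.2) (hN0 k hk)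
      have := hδ' p'.1 hd
      rw [dist_eq_norm] at this
      exact this.le
    rw [Real.dist_eq, abs_of_nonneg (by linarith [hhf_nonneg (p := p) log (hδkpos k) hnorm x])]
    · linarith
  have hHtend : ∀ p : M, Tendsto (fun k => Hfun p k) atTop (𝓝 0) := by
    intro p
    have := tendsto_integral_filter_of_dominated_convergence (μ := μ) (l := atTop)
      (F := fun k x => hhf log p (δk k) x) (f := fun _ => (0:ℝ))
      (bound := fun x => 2 * dist p x + 1)
      (Filter.Eventually.of_forall fun k =>
        (hhf_continuous log (hδkpos k) hnorm hcontr).aestronglyMeasurable)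
      (by
        refine Filter.Eventually.of_forall fun k => Filter.Eventually.of_forall fun x => ?_
        rw [Real.norm_eq_abs, abs_of_nonneg (hhf_nonneg log (hδkpos k) hnorm x)]
        show hhf log p (δk k) x ≤ 2 * dist p x + 1
        have := hhf_le (p := p) log (hδkpos k) hnorm x
        have := hδk1 k
        linarith)
      (((hdint p).const_mul 2).add (integrable_const 1))
      (Filter.Eventually.of_forall fun x => hhptw p x)
    simpa using this
  -- dense sequence
  haveI : Nonempty M := ⟨q⟩
  set D : ℕ → M := TopologicalSpace.denseSeq M with hDdef
  have hD : DenseRange D := TopologicalSpace.denseRange_denseSeq M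
  set a : ℝ := ∫ x, dist q x ∂μ with hadef
  have ha0 : 0 ≤ a := integral_nonneg fun x => dist_nonneg
  -- almost sure events
  have E1 : ∀ᵐ ω ∂P, ∀ n : ℕ, Tendsto
      (fun N : ℕ => (∑ i ∈ Finset.range N, ρ (D n) (X i ω)) / N) atTop (𝓝 (G (D n))) := by
    rw [ae_all_iff]
    intro n
    exact slln_wrapper P μ X hXmeas hident hindep _ (hρx (D n)) (hρint (D n))
  have E2 : ∀ᵐ ω ∂P, ∀ n k : ℕ, Tendsto
      (fun N : ℕ => (∑ i ∈ Finset.range N, hhf log (D n) (δk k) (X i ω)) / N) atTop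
      (𝓝 (Hfun (D n) k)) := by
    rw [ae_all_iff]
    intro n
    rw [ae_all_iff]
    intro k
    exact slln_wrapper P μ X hXmeas hident hindep _
      (hhf_continuous log (hδkpos k) hnorm hcontr) (hhint (D n) k)
  have E3 : ∀ᵐ ω ∂P, Tendsto
      (fun N : ℕ => (∑ i ∈ Finset.range N, dist q (X i ω)) / N) atTop (𝓝 a) :=
    slln_wrapper P μ X hXmeas hident hindep _ (continuous_const.dist continuous_id) (hdint q)
  have E4 : ∀ᵐ ω ∂P, Tendsto
      (fun N : ℕ => (∑ i ∈ Finset.range N, ρ q (X i ω)) / N) atTop (𝓝 (G q)) :=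
    slln_wrapper P μ X hXmeas hident hindep _ (hρx q) (hρint q)
  filter_upwards [E1, E2, E3, E4] with ω h1 h2 h3 h4
  set GN : ℕ → M → ℝ := fun N p => (∑ i ∈ Finset.range N, ρ p (X i ω)) / N with hGNdef
  set AN : ℕ → ℝ := fun N => (∑ i ∈ Finset.range N, dist q (X i ω)) / N with hANdef
  have h1β : (0:ℝ) < 1 - β := by linarith
  have hGq0 : 0 ≤ G q := integral_nonneg fun x => hρ0 q x
  set R : ℝ := (G q + 1) / (1 - β) + (a + 1) with hRdef
  have hRnn : 0 < R := by
    have h0 : 0 ≤ (G q + 1) / (1 - β) := div_nonneg (by linarith) h1β.le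
    rw [hRdef]; linarith
  -- minimality of qhat in terms of sums of ρ
  have hmin : ∀ (N : ℕ) (p : M), (∑ i ∈ Finset.range N, ρ (qhat N ω) (X i ω)) ≤
      ∑ i ∈ Finset.range N, ρ p (X i ω) := fun N p => hqhatmin N ω p
  -- eventual coercivity
  have hcoerce : ∀ᶠ N in atTop, qhat N ω ∈ closedBall q R := by
    have hev1 : ∀ᶠ N in atTop, GN N q < G q + 1 := h4.eventually_lt_const (by linarith)
    have hev2 : ∀ᶠ N in atTop, AN N < a + 1 := h3.eventually_lt_const (by linarith)
    filter_upwards [hev1, hev2, eventually_ge_atTop 1] with N hN1 hN2 hN3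
    have hNpos : (0:ℝ) < N := by exact_mod_cast hN3
    set w := qhat N ω with hwdef
    have hs1 : (1 - β) * (∑ i ∈ Finset.range N, dist w (X i ω)) ≤
        ∑ i ∈ Finset.range N, ρ w (X i ω) := by
      rw [Finset.mul_sum]
      exact Finset.sum_le_sum fun i _ => hρlb w (X i ω)
    have hs2 := hmin N q
    have hs3 : (N:ℝ) * dist w q ≤ (∑ i ∈ Finset.range N, dist w (X i ω)) +
        ∑ i ∈ Finset.range N, dist q (X i ω) := by
      have := Finset.sum_le_sum (f := fun _ : ℕ => dist w q)
        (g := fun i => dist w (X i ω) + dist q (X i ω))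
        (fun i (_ : i ∈ Finset.range N) => by
          show dist w q ≤ dist w (X i ω) + dist q (X i ω)
          have h1' := dist_triangle w (X i ω) q
          have h2' : dist (X i ω) q = dist q (X i ω) := dist_comm _ _
          linarith)
      simpa [Finset.sum_add_distrib, Finset.sum_const, Finset.card_range,
        nsmul_eq_mul] using this
    have hρqsum : (∑ i ∈ Finset.range N, ρ q (X i ω)) < (G q + 1) * N :=
      (div_lt_iff₀ hNpos).mp hN1
    have hdqsum : (∑ i ∈ Finset.range N, dist q (X i ω)) < (a + 1) * N :=
      (div_lt_iff₀ hNpos).mp hN2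
    rw [mem_closedBall]
    have hdiv : (G q + 1) / (1 - β) * (1 - β) = G q + 1 := div_mul_cancel₀ _ (ne_of_gt h1β)
    have hdw0 : 0 ≤ ∑ i ∈ Finset.range N, dist w (X i ω) :=
      Finset.sum_nonneg fun i _ => dist_nonneg
    rw [hRdef]
    nlinarith [mul_pos hNpos h1β, dist_nonneg (x := w) (y := q)]
  -- uniform law of large numbers on the ball
  have hULLN : ∀ η : ℝ, 0 < η →
      ∀ᶠ N in atTop, ∀ p ∈ closedBall q R, |GN N p - G p| < η := by
    intro η hη
    set C1 : ℝ := 1 + β * (a + R + 3) + 2 * β with hC1def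
    have hC1pos : 0 < C1 := by
      have : 0 ≤ β * (a + R + 3) := mul_nonneg hβ0 (by linarith)
      rw [hC1def]; nlinarith
    set η' : ℝ := min 1 (η / (2 * (2 * C1 + 1))) with hη'def
    have hη'pos : 0 < η' := lt_min one_pos (by positivity)
    have hη'1 : η' ≤ 1 := min_le_left _ _
    have hη'η : (2 * C1 + 1) * η' ≤ η / 2 := by
      have h2' : η' ≤ η / (2 * (2 * C1 + 1)) := min_le_right _ _
      have h3' : (0:ℝ) < 2 * C1 + 1 := by linarith
      calc (2 * C1 + 1) * η' ≤ (2 * C1 + 1) * (η / (2 * (2 * C1 + 1))) := by nlinarith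
        _ = η / 2 := by field_simp
    -- covering data
    have key : ∀ z ∈ closedBall q R, ∃ n k : ℕ,
        z ∈ ball (D n) (δk k) ∧ Hfun (D n) k ≤ η' ∧
        (∀ p' ∈ closedBall (D n) (δk k), ‖dir ξ p' - dir ξ (D n)‖ ≤ η') ∧ δk k ≤ η' := by
      intro z _
      obtain ⟨r1, hr1pos, hr1⟩ := Metric.continuous_iff.mp (hdir ξ) z (η'/2) (half_pos hη'pos)
      have hev : ∀ᶠ k' in atTop, Hfun z k' < η'/2 ∧ δk k' < min r1 η' :=
        ((hHtend z).eventually_lt_const (half_pos hη'pos)).and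
          (hδk_tendsto.eventually_lt_const (lt_min hr1pos hη'pos))
      obtain ⟨k', hk'⟩ := hev.exists
      set r := δk k' with hrdef
      have hrpos : 0 < r := hδkpos k'
      have hrr1 : r < r1 := lt_of_lt_of_le hk'.2 (min_le_left _ _)
      have hrη' : r < η' := lt_of_lt_of_le hk'.2 (min_le_right _ _)
      set k := 2 * k' + 1 with hkdef
      have hkr : δk k = r / 2 := by
        have h2' : (((2 * k' + 1 : ℕ) : ℝ) + 1) = 2 * (((k' : ℕ) : ℝ) + 1) := by
          push_cast; ring
        rw [hrdef, hδkdef]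
        simp only [hkdef]
        rw [h2', mul_inv]
        ring
      obtain ⟨n, hn⟩ := hD.exists_dist_lt z (by positivity : (0:ℝ) < δk k / 2)
      have hsub : closedBall (D n) (δk k) ⊆ closedBall z r := by
        intro p' hp'
        rw [mem_closedBall] at hp' ⊢
        have ht := dist_triangle p' (D n) z
        have hdnz : dist (D n) z < δk k / 2 := by rw [dist_comm]; exact hn
        rw [hkr] at hp' hdnz
        linarith
      have hmem : D n ∈ closedBall z r := hsub (mem_closedBall_self (hδkpos k).le)
      refine ⟨n, k, ?_, ?_, ?_, ?_⟩
      · rw [mem_ball]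
        have := hδkpos k
        linarith
      · have hpt : ∀ x, hhf log (D n) (δk k) x ≤ 2 * hhf log z r x := by
          intro x
          haveI := hhf_nonempty (p := D n) (hδkpos k)
          refine ciSup_le fun p' => ?_
          have ha1 := le_hhf (p := z) log hrpos hnorm (hsub p'.2) x
          have ha2 := le_hhf (p := z) log hrpos hnorm hmem x
          have ha3 : ‖log p'.1 x - log (D n) x‖ ≤
              ‖log p'.1 x - log z x‖ + ‖log z x - log (D n) x‖ :=
            norm_sub_le_norm_sub_add_norm_sub _ _ _
          have ha4 : ‖log z x - log (D n) x‖ = ‖log (D n) x - log z x‖ := norm_sub_rev _ _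
          linarith
        calc Hfun (D n) k ≤ ∫ x, 2 * hhf log z r x ∂μ :=
              integral_mono (hhint (D n) k) ((hhint z k').const_mul 2) hpt
          _ = 2 * Hfun z k' := by rw [integral_const_mul]
          _ ≤ η' := by linarith [hk'.1]
      · intro p' hp'
        have hd1 : dist p' z < r1 := lt_of_le_of_lt (mem_closedBall.mp (hsub hp')) hrr1
        have hd2 : dist (D n) z < r1 := lt_of_le_of_lt (mem_closedBall.mp hmem) hrr1
        have hb1 := hr1 p' hd1
        have hb2 := hr1 (D n) hd2
        rw [dist_eq_norm] at hb1 hb2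
        calc ‖dir ξ p' - dir ξ (D n)‖ ≤
            ‖dir ξ p' - dir ξ z‖ + ‖dir ξ z - dir ξ (D n)‖ :=
              norm_sub_le_norm_sub_add_norm_sub _ _ _
          _ ≤ η' := by
              have := norm_sub_rev (dir ξ z) (dir ξ (D n))
              linarith [norm_sub_rev (dir ξ (D n)) (dir ξ z)]
      · rw [hkr]; linarith
    choose! nz kz hz1 hz2 hz3 hz4 using key
    have hcover : closedBall q R ⊆ ⋃ z ∈ closedBall q R, ball (D (nz z)) (δk (kz z)) :=
      fun z hz => Set.mem_biUnion hz (hz1 z hz)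
    obtain ⟨T, hTsub, hTfin, hTcover⟩ :=
      (isCompact_closedBall q R).elim_finite_subcover_image (fun z _ => isOpen_ball) hcover
    have hev : ∀ᶠ N in atTop, (∀ z ∈ T,
        |GN N (D (nz z)) - G (D (nz z))| < η' ∧
        (∑ i ∈ Finset.range N, hhf log (D (nz z)) (δk (kz z)) (X i ω)) / N < 2 * η') ∧
        AN N < a + 1 ∧ 1 ≤ N := by
      refine Filter.Eventually.and ?_
        ((h3.eventually_lt_const (by linarith)).and (eventually_ge_atTop 1))
      rw [eventually_all_finite hTfin]
      intro z hzT
      have hzK := hTsub hzT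
      have hevA : ∀ᶠ N in atTop, |GN N (D (nz z)) - G (D (nz z))| < η' := by
        have := Metric.tendsto_nhds.mp (h1 (nz z)) η' hη'pos
        filter_upwards [this] with N hN
        rw [Real.dist_eq] at hN
        exact hN
      have hevB : ∀ᶠ N in atTop,
          (∑ i ∈ Finset.range N, hhf log (D (nz z)) (δk (kz z)) (X i ω)) / N < 2 * η' :=
        (h2 (nz z) (kz z)).eventually_lt_const (by linarith [hz2 z hzK])
      exact hevA.and hevB
    filter_upwards [hev] with N hN
    obtain ⟨hNT, hNA, hN1'⟩ := hN
    intro p hpK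
    obtain ⟨z, hzT, hpz⟩ := Set.mem_iUnion₂.mp (hTcover hpK)
    have hzK : z ∈ closedBall q R := hTsub hzT
    set p0 := D (nz z) with hp0def
    set k0 := kz z with hk0def
    set δ := δk k0 with hδdef
    have hδpos : 0 < δ := hδkpos k0
    have hδη' : δ ≤ η' := hz4 z hzK
    have hHb : Hfun p0 k0 ≤ η' := hz2 z hzK
    have hdirb := hz3 z hzK
    obtain ⟨hGNb, hhb⟩ := hNT z hzT
    have hpmem : p ∈ closedBall p0 δ := ball_subset_closedBall hpz
    have hNpos : (0:ℝ) < N := by exact_mod_cast hN1'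
    -- pointwise bound
    have hpt : ∀ x, |ρ p x - ρ p0 x| ≤ δ + β * η' * (dist p0 x + δ) + β * hhf log p0 δ x := by
      intro x
      have hb1 := hρdiff p p0 x
      have hb2 : dist p p0 ≤ δ := mem_closedBall.mp hpmem
      have hb3 : ‖dir ξ p - dir ξ p0‖ ≤ η' := hdirb p hpmem
      have hb4 : ‖log p x - log p0 x‖ ≤ hhf log p0 δ x :=
        le_hhf (p := p0) log hδpos hnorm hpmem x
      have hb5 : dist p x ≤ dist p0 x + δ := by
        have := dist_triangle p p0 x
        have := dist_comm p p0
        linarith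
      have hb6 : ‖dir ξ p - dir ξ p0‖ * dist p x ≤ η' * (dist p0 x + δ) :=
        mul_le_mul hb3 hb5 dist_nonneg hη'pos.le
      have hb7 : β * (‖dir ξ p - dir ξ p0‖ * dist p x) ≤ β * (η' * (dist p0 x + δ)) :=
        mul_le_mul_of_nonneg_left hb6 hβ0
      have hb8 : β * ‖log p x - log p0 x‖ ≤ β * hhf log p0 δ x :=
        mul_le_mul_of_nonneg_left hb4 hβ0
      calc |ρ p x - ρ p0 x| ≤
          dist p p0 + β * ‖dir ξ p - dir ξ p0‖ * dist p x + β * ‖log p x - log p0 x‖ := hb1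
        _ ≤ δ + β * η' * (dist p0 x + δ) + β * hhf log p0 δ x := by
            rw [mul_assoc β, mul_assoc β]
            linarith
    -- sum bounds
    set s1 : ℝ := ∑ i ∈ Finset.range N, dist p0 (X i ω) with hs1def
    set s2 : ℝ := ∑ i ∈ Finset.range N, hhf log p0 δ (X i ω) with hs2def
    have hdq : dist p0 q ≤ R + 1 := by
      have h1' : dist p0 p ≤ δ := by rw [dist_comm]; exact mem_closedBall.mp hpmem
      have h2' : dist p q ≤ R := mem_closedBall.mp hpK
      have := dist_triangle p0 p q
      linarith
    have hsum2 : s1 ≤ (N:ℝ) * ((a + 1) + (R + 1)) := by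
      have hstep : s1 ≤ ∑ i ∈ Finset.range N, (dist p0 q + dist q (X i ω)) := by
        rw [hs1def]
        exact Finset.sum_le_sum fun i _ => dist_triangle p0 q (X i ω)
      have hdqs : (∑ i ∈ Finset.range N, dist q (X i ω)) < (a + 1) * N :=
        (div_lt_iff₀ hNpos).mp hNA
      have : (∑ i ∈ Finset.range N, (dist p0 q + dist q (X i ω)))
          = (N:ℝ) * dist p0 q + ∑ i ∈ Finset.range N, dist q (X i ω) := by
        rw [Finset.sum_add_distrib, Finset.sum_const, Finset.card_range, nsmul_eq_mul]
      nlinarith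
    have hsum3 : s2 ≤ (N:ℝ) * (2 * η') := by
      have := (div_lt_iff₀ hNpos).mp hhb
      nlinarith
    have hs10 : 0 ≤ s1 := Finset.sum_nonneg fun i _ => dist_nonneg
    have hs20 : 0 ≤ s2 := Finset.sum_nonneg fun i _ => hhf_nonneg log hδpos hnorm _
    -- bound |GN N p - GN N p0|
    have hB1 : |GN N p - GN N p0| ≤ η' * C1 := by
      have hEq : GN N p - GN N p0 =
          (∑ i ∈ Finset.range N, (ρ p (X i ω) - ρ p0 (X i ω))) / N := by
        rw [hGNdef]
        simp only
        rw [Finset.sum_sub_distrib, sub_div]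
      have habs : |∑ i ∈ Finset.range N, (ρ p (X i ω) - ρ p0 (X i ω))| ≤
          ∑ i ∈ Finset.range N, (δ + β * η' * (dist p0 (X i ω) + δ) + β * hhf log p0 δ (X i ω)) :=
        (Finset.abs_sum_le_sum_abs _ _).trans (Finset.sum_le_sum fun i _ => hpt _)
      have hsumb : (∑ i ∈ Finset.range N,
          (δ + β * η' * (dist p0 (X i ω) + δ) + β * hhf log p0 δ (X i ω)))
          = (N:ℝ) * δ + β * η' * (s1 + (N:ℝ) * δ) + β * s2 := by
        have h1' : ∀ i : ℕ, δ + β * η' * (dist p0 (X i ω) + δ) + β * hhf log p0 δ (X i ω)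
            = (δ + β * η' * δ) + β * η' * dist p0 (X i ω) + β * hhf log p0 δ (X i ω) :=
          fun i => by ring
        rw [Finset.sum_congr rfl fun i _ => h1' i, Finset.sum_add_distrib,
          Finset.sum_add_distrib, Finset.sum_const, Finset.card_range,
          ← Finset.mul_sum, ← Finset.mul_sum, nsmul_eq_mul, hs1def, hs2def]
        ring
      have hfinal : (∑ i ∈ Finset.range N,
          (δ + β * η' * (dist p0 (X i ω) + δ) + β * hhf log p0 δ (X i ω))) ≤ (N:ℝ) * (η' * C1) := by
        rw [hsumb, hC1def]
        have t1 : (N:ℝ) * δ ≤ (N:ℝ) * η' := mul_le_mul_of_nonneg_left hδη' hNpos.le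
        have t2 : s1 + (N:ℝ) * δ ≤ (N:ℝ) * ((a + 1) + (R + 1)) + (N:ℝ) * η' := by
          linarith
        have t2' : β * η' * (s1 + (N:ℝ) * δ) ≤
            β * η' * ((N:ℝ) * ((a + 1) + (R + 1)) + (N:ℝ) * η') :=
          mul_le_mul_of_nonneg_left t2 (mul_nonneg hβ0 hη'pos.le)
        have t3 : β * s2 ≤ β * ((N:ℝ) * (2 * η')) := mul_le_mul_of_nonneg_left hsum3 hβ0
        have t4 : 0 ≤ β * η' * (N:ℝ) * (1 - η') :=
          mul_nonneg (mul_nonneg (mul_nonneg hβ0 hη'pos.le) hNpos.le) (by linarith)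
        nlinarith [t1, t2', t3, t4]
      rw [hEq, abs_div, abs_of_pos hNpos]
      rw [div_le_iff₀ hNpos]
      calc |∑ i ∈ Finset.range N, (ρ p (X i ω) - ρ p0 (X i ω))| ≤ (N:ℝ) * (η' * C1) :=
            habs.trans hfinal
        _ = η' * C1 * N := by ring
    -- bound |G p - G p0|
    have hB2 : |G p - G p0| ≤ η' * C1 := by
      have hint1 : Integrable (fun x => ρ p x - ρ p0 x) μ := (hρint p).sub (hρint p0)
      have hintb : Integrable
          (fun x => δ + β * η' * (dist p0 x + δ) + β * hhf log p0 δ x) μ := by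
        refine Integrable.add (Integrable.add (integrable_const δ) ?_) ?_
        · exact (((hdint p0).add (integrable_const δ)).const_mul (β * η'))
        · exact ((hhint p0 k0).const_mul β)
      have hstep1 : |G p - G p0| = |∫ x, (ρ p x - ρ p0 x) ∂μ| := by
        rw [hGdef]
        simp only
        rw [integral_sub (hρint p) (hρint p0)]
      have hstep2 : |∫ x, (ρ p x - ρ p0 x) ∂μ| ≤
          ∫ x, (δ + β * η' * (dist p0 x + δ) + β * hhf log p0 δ x) ∂μ := by
        have hn1 := norm_integral_le_integral_norm (μ := μ) (f := fun x => ρ p x - ρ p0 x)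
        rw [Real.norm_eq_abs] at hn1
        refine hn1.trans ?_
        refine integral_mono hint1.norm hintb fun x => ?_
        rw [Real.norm_eq_abs]
        exact hpt x
      have hdistint : (∫ x, dist p0 x ∂μ) ≤ a + (R + 1) := by
        have hle : ∀ x, dist p0 x ≤ dist p0 q + dist q x := fun x => dist_triangle p0 q x
        calc (∫ x, dist p0 x ∂μ) ≤ ∫ x, (dist p0 q + dist q x) ∂μ :=
              integral_mono (hdint p0) ((integrable_const _).add (hdint q)) hle
          _ = dist p0 q + a := by
              rw [integral_add (integrable_const _) (hdint q), integral_const]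
              simp [hadef]
          _ ≤ a + (R + 1) := by linarith
      have hbint : (∫ x, (δ + β * η' * (dist p0 x + δ) + β * hhf log p0 δ x) ∂μ)
          = δ + β * η' * ((∫ x, dist p0 x ∂μ) + δ) + β * Hfun p0 k0 := by
        have hi1 : Integrable (fun x => β * η' * (dist p0 x + δ)) μ := by
          have := ((hdint p0).add (integrable_const δ)).const_mul (β * η')
          simpa using this
        have hi2 : Integrable (fun x => β * hhf log p0 δ x) μ := by
          simpa using (hhint p0 k0).const_mul β
        have hi0 : Integrable (fun x => δ + β * η' * (dist p0 x + δ)) μ := by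
          simpa using (integrable_const δ).add hi1
        rw [integral_add hi0 hi2, integral_add (integrable_const δ) hi1,
          integral_const, integral_const_mul, integral_const_mul,
          integral_add (hdint p0) (integrable_const δ), integral_const]
        simp [hHdef, hδdef]
      have hd0 : 0 ≤ ∫ x, dist p0 x ∂μ := integral_nonneg fun x => dist_nonneg
      rw [hstep1]
      refine hstep2.trans ?_
      rw [hbint, hC1def]
      nlinarith [mul_nonneg hβ0 hη'pos.le]
    have hB3 : |GN N p0 - G p0| < η' := hGNb
    calc |GN N p - G p| ≤ |GN N p - GN N p0| + |GN N p0 - G p| := abs_sub_le _ _ _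
      _ ≤ |GN N p - GN N p0| + (|GN N p0 - G p0| + |G p0 - G p|) := by
          linarith [abs_sub_le (GN N p0) (G p0) (G p)]
      _ ≤ η' * C1 + (η' + η' * C1) := by
          have := abs_sub_comm (G p) (G p0)
          linarith [hB1, hB2, hB3.le, abs_sub_comm (G p0) (G p)]
      _ ≤ η / 2 := by nlinarith
      _ < η := by linarith
  -- final argument
  rw [Metric.tendsto_atTop]
  intro ε hε
  by_cases hS : ∃ p, (p ∈ closedBall q R ∧ ε ≤ dist p q)
  · set S : Set M := {p | p ∈ closedBall q R ∧ ε ≤ dist p q} with hSdef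
    have hScpt : IsCompact S :=
      (isCompact_closedBall q R).inter_right
        (isClosed_le continuous_const (continuous_id.dist continuous_const))
    obtain ⟨p₀, hp₀S, hp₀min⟩ := hScpt.exists_isMinOn hS hGcont.continuousOn
    have hp₀ne : p₀ ≠ q := by
      intro h
      have h1' : ε ≤ dist p₀ q := hp₀S.2
      rw [h, dist_self] at h1'
      linarith
    set η := (G p₀ - G q) / 3 with hηdef
    have hηpos : 0 < η := by
      have := hGq_lt p₀ hp₀ne
      rw [hηdef]; linarith
    have hevU := hULLN η hηpos
    have hevq : ∀ᶠ N in atTop, |GN N q - G q| < η := by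
      have := Metric.tendsto_nhds.mp h4 η hηpos
      filter_upwards [this] with N hN
      rw [Real.dist_eq] at hN
      exact hN
    have hfinal : ∀ᶠ N in atTop, dist (qhat N ω) q < ε := by
      filter_upwards [hcoerce, hevU, hevq, eventually_ge_atTop 1]
        with N hK hU hq' hN1
      by_contra hcon
      push_neg at hcon
      have hwS : qhat N ω ∈ S := ⟨hK, hcon⟩
      have hmin' : G p₀ ≤ G (qhat N ω) := hp₀min hwS
      have hNpos : (0:ℝ) < N := by exact_mod_cast hN1
      have hGNle : GN N (qhat N ω) ≤ GN N q := by
        rw [hGNdef]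
        simp only
        rw [div_le_div_iff₀ hNpos hNpos]
        exact mul_le_mul_of_nonneg_right (hmin N q) hNpos.le
      have hU1 := hU (qhat N ω) hK
      have : G (qhat N ω) < G q + 3 * η := by
        have ha1 : G (qhat N ω) ≤ GN N (qhat N ω) + η := by
          have := abs_sub_lt_iff.mp hU1
          linarith [this.2]
        have ha2 : GN N q < G q + η := by
          have := abs_sub_lt_iff.mp hq'
          linarith [this.1]
        linarith
      rw [hηdef] at this
      linarith
    exact eventually_atTop.mp hfinal
  · push_neg at hS
    have hfinal : ∀ᶠ N in atTop, dist (qhat N ω) q < ε := by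
      filter_upwards [hcoerce] with N hK
      exact hS _ hK
    exact eventually_atTop.mp hfinal
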